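/- Applying the amplitude damping channel n₁ times locally to both qubits of a four-parameter state σ(f₁,f₂,f₃,f₄) yields σ(f̃₁,f̃₂,f̃₃,f̃₄) with f̃₁ = (1/4)[f₁(1+2t+t₊) + f₂(1−2t+t₊) + 2f₅(1+t₋) + 4f₃t(1−t)], f̃₂ = (1/4)[f₁(1−2t+t₊) + f₂(1+2t+t₊) + 2f₅(1+t₋) + 4f₃t(1−t)], f̃₃ = (1−t)/2 + t f₃, f̃₄ = f₄ t, where t = (1−γ)^{n₁}, t₊ = (1−t)² + t², t₋ = (1−t)² − t², f₅ = (1−f₁−f₂)/2; in particular the four-parameter family is closed under local amplitude damping noise. -/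
import Mathlib


open Matrix Kronecker BigOperators

noncomputable section

def pI : Matrix (Fin 2) (Fin 2) ℂ := 1
def pX : Matrix (Fin 2) (Fin 2) ℂ := !![0, 1; 1, 0]
def pY : Matrix (Fin 2) (Fin 2) ℂ := !![0, -Complex.I; Complex.I, 0]
def pZ : Matrix (Fin 2) (Fin 2) ℂ := !![1, 0; 0, -1]

def K0 (γ : ℝ) : Matrix (Fin 2) (Fin 2) ℂ := !![1, 0; 0, (Real.sqrt (1 - γ) : ℂ)]
def K1 (γ : ℝ) : Matrix (Fin 2) (Fin 2) ℂ := !![0, (Real.sqrt γ : ℂ); 0, 0]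

/-- The amplitude damping channel on one qubit. -/
def AD (γ : ℝ) (ρ : Matrix (Fin 2) (Fin 2) ℂ) : Matrix (Fin 2) (Fin 2) ℂ :=
  K0 γ * ρ * (K0 γ)ᴴ + K1 γ * ρ * (K1 γ)ᴴ

abbrev Q2 := Fin 2 × Fin 2

/-- The Bell state |Φ⁺⟩ = (|00⟩+|11⟩)/√2. -/
def φplus : Q2 → ℂ := fun p => if p.1 = p.2 then ((Real.sqrt 2 : ℂ))⁻¹ else 0

/-- |Φxz⟩ = (I ⊗ XˣZᶻ)|Φ⁺⟩. -/
def bell (x z : Fin 2) : Q2 → ℂ :=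
  ((1 : Matrix (Fin 2) (Fin 2) ℂ) ⊗ₖ (pX ^ (x : ℕ) * pZ ^ (z : ℕ))).mulVec φplus

/-- |v⟩⟨w|. -/
def outer (v w : Q2 → ℂ) : Matrix Q2 Q2 ℂ := vecMulVec v (star w)

/-- |v⟩⟨v|. -/
def proj (v : Q2 → ℂ) : Matrix Q2 Q2 ℂ := outer v v

/-- The amplitude damping channel acting locally on both qubits. -/
def AD2 (γ : ℝ) (ρ : Matrix Q2 Q2 ℂ) : Matrix Q2 Q2 ℂ :=
  (K0 γ ⊗ₖ K0 γ) * ρ * (K0 γ ⊗ₖ K0 γ)ᴴ + (K0 γ ⊗ₖ K1 γ) * ρ * (K0 γ ⊗ₖ K1 γ)ᴴ +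
  (K1 γ ⊗ₖ K0 γ) * ρ * (K1 γ ⊗ₖ K0 γ)ᴴ + (K1 γ ⊗ₖ K1 γ) * ρ * (K1 γ ⊗ₖ K1 γ)ᴴ

/-- Three-parameter link state. -/
def σ3 (c1 c2 c3 : ℝ) : Matrix Q2 Q2 ℂ :=
  (c1 : ℂ) • proj (bell 0 0) + (c2 : ℂ) • proj (bell 0 1) +
  (c3 : ℂ) • (outer (bell 0 0) (bell 0 1) + outer (bell 0 1) (bell 0 0)) +
  (((1 - c1 - c2) / 2 : ℝ) : ℂ) • (proj (bell 1 0) + proj (bell 1 1))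

/-- Four-parameter AQN link state. -/
def σ4 (h1 h2 h3 h4 : ℝ) : Matrix Q2 Q2 ℂ :=
  σ3 h1 h2 h3 + (h4 : ℂ) • (outer (bell 1 0) (bell 1 1) + outer (bell 1 1) (bell 1 0))

abbrev Q4 := Q2 × Q2

/-- ⟨Φxz|_{Q₁Q₂} ⊗ XˣZᶻ_R as a matrix from the four-qubit space P Q₁ Q₂ R to P R. -/
def braB (x z : Fin 2) : Matrix Q2 Q4 ℂ :=
  Matrix.of fun pr q =>
    (if pr.1 = q.1.1 then (1 : ℂ) else 0) *
      (starRingEnd ℂ) (bell x z (q.1.2, q.2.1)) * (pX ^ (x : ℕ) * pZ ^ (z : ℕ)) pr.2 q.2.2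

/-- The entanglement swapping map. -/
def swapMap (ρ : Matrix Q4 Q4 ℂ) : Matrix Q2 Q2 ℂ :=
  ∑ x : Fin 2, ∑ z : Fin 2, braB x z * ρ * (braB x z)ᴴ


def u1 (t f1 f2 f3 : ℝ) : ℝ :=
  (f1 * (1 + 2 * t + ((1 - t) ^ 2 + t ^ 2)) + f2 * (1 - 2 * t + ((1 - t) ^ 2 + t ^ 2)) +
   2 * ((1 - f1 - f2) / 2) * (1 + ((1 - t) ^ 2 - t ^ 2)) + 4 * f3 * t * (1 - t)) / 4

def u2 (t f1 f2 f3 : ℝ) : ℝ :=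
  (f1 * (1 - 2 * t + ((1 - t) ^ 2 + t ^ 2)) + f2 * (1 + 2 * t + ((1 - t) ^ 2 + t ^ 2)) +
   2 * ((1 - f1 - f2) / 2) * (1 + ((1 - t) ^ 2 - t ^ 2)) + 4 * f3 * t * (1 - t)) / 4

def u3 (t f3 : ℝ) : ℝ := (1 - t) / 2 + t * f3

/-- explicit sparse form of the four-parameter state -/
def Sm (a b c d e : ℝ) : Matrix Q2 Q2 ℂ := Matrix.of fun p q =>
  if p = ((0:Fin 2),(0:Fin 2)) then (if q = (0,0) then (a:ℂ) else if q = (1,1) then (b:ℂ) else 0)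
  else if p = (0,1) then (if q = (0,1) then (c:ℂ) else 0)
  else if p = (1,0) then (if q = (1,0) then (d:ℂ) else 0)
  else (if q = (0,0) then (b:ℂ) else if q = (1,1) then (e:ℂ) else 0)

lemma bell00 : bell 0 0 = fun p : Q2 => if p = (0,0) then ((Real.sqrt 2 : ℂ))⁻¹ else if p = (1,1) then ((Real.sqrt 2 : ℂ))⁻¹ else 0 := by
  funext ⟨i,j⟩
  fin_cases i <;> fin_cases j <;>
    simp [bell, φplus, pX, pZ, Matrix.mulVec, dotProduct, Fintype.sum_prod_type,
      Fin.sum_univ_two, Matrix.kroneckerMap_apply, Matrix.one_apply]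

lemma bell01 : bell 0 1 = fun p : Q2 => if p = (0,0) then ((Real.sqrt 2 : ℂ))⁻¹ else if p = (1,1) then -((Real.sqrt 2 : ℂ))⁻¹ else 0 := by
  funext ⟨i,j⟩
  fin_cases i <;> fin_cases j <;>
    simp [bell, φplus, pX, pZ, Matrix.mulVec, dotProduct, Fintype.sum_prod_type,
      Fin.sum_univ_two, Matrix.kroneckerMap_apply, Matrix.one_apply]

lemma bell10 : bell 1 0 = fun p : Q2 => if p = (0,1) then ((Real.sqrt 2 : ℂ))⁻¹ else if p = (1,0) then ((Real.sqrt 2 : ℂ))⁻¹ else 0 := by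
  funext ⟨i,j⟩
  fin_cases i <;> fin_cases j <;>
    simp [bell, φplus, pX, pZ, Matrix.mulVec, dotProduct, Fintype.sum_prod_type,
      Fin.sum_univ_two, Matrix.kroneckerMap_apply, Matrix.one_apply] <;>
    norm_num [Prod.ext_iff]

lemma bell11 : bell 1 1 = fun p : Q2 => if p = (0,1) then ((Real.sqrt 2 : ℂ))⁻¹ else if p = (1,0) then -((Real.sqrt 2 : ℂ))⁻¹ else 0 := by
  funext ⟨i,j⟩
  fin_cases i <;> fin_cases j <;>
    simp [bell, φplus, pX, pZ, Matrix.mulVec, dotProduct, Fintype.sum_prod_type,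
      Fin.sum_univ_two, Matrix.kroneckerMap_apply, Matrix.one_apply] <;>
    norm_num [Prod.ext_iff]

lemma sqrt2_inv_sq : ((Real.sqrt 2 : ℂ))⁻¹ * ((Real.sqrt 2 : ℂ))⁻¹ = 1/2 := by
  rw [← mul_inv]
  norm_cast
  rw [Real.mul_self_sqrt (by norm_num : (0:ℝ) ≤ 2)]
  norm_num

lemma σ4_Sm (f1 f2 f3 f4 : ℝ) : σ4 f1 f2 f3 f4 =
    Sm ((f1+f2)/2+f3) ((f1-f2)/2) ((1-f1-f2)/2+f4) ((1-f1-f2)/2-f4) ((f1+f2)/2-f3) := by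
  ext ⟨i,j⟩ ⟨k,l⟩
  fin_cases i <;> fin_cases j <;> fin_cases k <;> fin_cases l <;>
    simp only [σ4, σ3, proj, outer, Sm, bell00, bell01, bell10, bell11,
      Matrix.add_apply, Matrix.smul_apply, Matrix.vecMulVec_apply, Pi.star_apply,
      Matrix.of_apply, smul_eq_mul, RCLike.star_def, map_inv₀, map_neg,
      Complex.conj_ofReal, Prod.mk.injEq]
  all_goals norm_num [sqrt2_inv_sq]
  all_goals (push_cast; ring)

set_option maxHeartbeats 2000000 in
lemma AD2_Sm (γ : ℝ) (h0 : 0 ≤ γ) (h1 : γ ≤ 1) (a b c d e : ℝ) :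
    AD2 γ (Sm a b c d e) =
      Sm (a + γ*c + γ*d + γ^2*e) ((1-γ)*b) ((1-γ)*c + γ*(1-γ)*e)
         ((1-γ)*d + γ*(1-γ)*e) ((1-γ)^2*e) := by
  have hy2 : ((Real.sqrt (1-γ) : ℂ))^2 = ((1-γ : ℝ) : ℂ) := by
    norm_cast; rw [Real.sq_sqrt (by linarith)]
  have hx2 : ((Real.sqrt γ : ℂ))^2 = ((γ : ℝ) : ℂ) := by
    norm_cast; rw [Real.sq_sqrt h0]
  have hy4 : ((Real.sqrt (1-γ) : ℂ))^4 = (((1-γ)^2 : ℝ) : ℂ) := by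
    rw [show (4:ℕ) = 2*2 from rfl, pow_mul, hy2]; push_cast; ring
  have hx4 : ((Real.sqrt γ : ℂ))^4 = ((γ^2 : ℝ) : ℂ) := by
    rw [show (4:ℕ) = 2*2 from rfl, pow_mul, hx2]; push_cast; ring
  ext ⟨i,j⟩ ⟨k,l⟩
  fin_cases i <;> fin_cases j <;> fin_cases k <;> fin_cases l <;>
    simp only [AD2, Sm, K0, K1, Matrix.mul_apply, Matrix.add_apply,
      Fintype.sum_prod_type, Fin.sum_univ_two, Matrix.kroneckerMap_apply,
      Matrix.conjTranspose_apply, Matrix.of_apply, Prod.mk.injEq,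
      Matrix.cons_val', Matrix.cons_val_zero, Matrix.cons_val_one, Matrix.head_cons,
      Matrix.empty_val', Matrix.cons_val_fin_one, Matrix.head_fin_const,
      RCLike.star_def, Complex.conj_ofReal, _root_.map_one, map_zero,
      mul_ite, ite_mul, mul_zero, zero_mul, mul_one, one_mul, star_one, star_zero]
  all_goals norm_num
  all_goals try tauto
  all_goals ring_nf
  all_goals try simp only [hx2, hy2, hx4, hy4]
  all_goals push_cast
  all_goals try ring_nf
  all_goals try tauto

lemma Sm_congr {a b c d e a' b' c' d' e' : ℝ} (ha : a = a') (hb : b = b') (hc : c = c')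
    (hd : d = d') (he : e = e') : Sm a b c d e = Sm a' b' c' d' e' := by
  rw [ha, hb, hc, hd, he]

/-- AD noise update rule: the four-parameter family is closed under n₁-fold local
amplitude damping on both qubits, with the stated coefficient update. -/
theorem adc_noise_update_rule (γ : ℝ) (h0 : 0 ≤ γ) (h1 : γ ≤ 1) (n₁ : ℕ)
    (f1 f2 f3 f4 : ℝ) :
    (AD2 γ)^[n₁] (σ4 f1 f2 f3 f4) =
      σ4 ((f1 * (1 + 2 * (1 - γ) ^ n₁ + ((1 - (1 - γ) ^ n₁) ^ 2 + ((1 - γ) ^ n₁) ^ 2)) +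
           f2 * (1 - 2 * (1 - γ) ^ n₁ + ((1 - (1 - γ) ^ n₁) ^ 2 + ((1 - γ) ^ n₁) ^ 2)) +
           2 * ((1 - f1 - f2) / 2) * (1 + ((1 - (1 - γ) ^ n₁) ^ 2 - ((1 - γ) ^ n₁) ^ 2)) +
           4 * f3 * (1 - γ) ^ n₁ * (1 - (1 - γ) ^ n₁)) / 4)
         ((f1 * (1 - 2 * (1 - γ) ^ n₁ + ((1 - (1 - γ) ^ n₁) ^ 2 + ((1 - γ) ^ n₁) ^ 2)) +
           f2 * (1 + 2 * (1 - γ) ^ n₁ + ((1 - (1 - γ) ^ n₁) ^ 2 + ((1 - γ) ^ n₁) ^ 2)) +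
           2 * ((1 - f1 - f2) / 2) * (1 + ((1 - (1 - γ) ^ n₁) ^ 2 - ((1 - γ) ^ n₁) ^ 2)) +
           4 * f3 * (1 - γ) ^ n₁ * (1 - (1 - γ) ^ n₁)) / 4)
         ((1 - (1 - γ) ^ n₁) / 2 + (1 - γ) ^ n₁ * f3)
         (f4 * (1 - γ) ^ n₁) := by
  have key : ∀ n : ℕ, (AD2 γ)^[n] (σ4 f1 f2 f3 f4) =
      σ4 (u1 ((1-γ)^n) f1 f2 f3) (u2 ((1-γ)^n) f1 f2 f3) (u3 ((1-γ)^n) f3)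
        (f4 * (1-γ)^n) := by
    intro n
    induction n with
    | zero =>
      simp only [Function.iterate_zero, id_eq, pow_zero]
      rw [show u1 (1:ℝ) f1 f2 f3 = f1 by unfold u1; ring,
          show u2 (1:ℝ) f1 f2 f3 = f2 by unfold u2; ring,
          show u3 (1:ℝ) f3 = f3 by unfold u3; ring, mul_one]
    | succ n ih =>
      rw [Function.iterate_succ_apply', ih, σ4_Sm, AD2_Sm γ h0 h1, σ4_Sm]
      exact Sm_congr (by unfold u1 u2 u3; ring) (by unfold u1 u2; ring)
        (by unfold u1 u2 u3; ring) (by unfold u1 u2 u3; ring) (by unfold u1 u2 u3; ring)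
  exact key n₁
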